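/- If A^π(s,a) ≥ 0 for all (s,a) and A^π(s*,a*) > 0 for some state-action pair (s*,a*) reachable with positive probability at some time t under a policy π* from ρ0, then η(π*) > η(π). -/

import Mathlib

open scoped BigOperators

/-- A finite, infinite-horizon discounted MDP `(S, A, P, r, ρ0, γ)`. -/
structure MDP (S A : Type) [Fintype S] [Fintype A] where
  P : S → A → S → ℝ
  r : S → ℝ
  ρ0 : S → ℝ
  γ : ℝ
  P_nonneg : ∀ s a s', 0 ≤ P s a s'
  P_sum : ∀ s a, ∑ s', P s a s' = 1
  ρ0_nonneg : ∀ s, 0 ≤ ρ0 s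
  ρ0_sum : ∑ s, ρ0 s = 1
  γ_pos : 0 < γ
  γ_lt_one : γ < 1

variable {S A : Type} [Fintype S] [Fintype A] [DecidableEq S] [DecidableEq A]

/-- A stochastic policy: a probability distribution over actions at each state. -/
def IsPolicy (π : S → A → ℝ) : Prop :=
  (∀ s a, 0 ≤ π s a) ∧ ∀ s, ∑ a, π s a = 1

namespace MDP

/-- Distribution of the state `s_t` when `s_0 ∼ d` and actions are sampled from `π`. -/
def stateDist (M : MDP S A) (π : S → A → ℝ) : ℕ → (S → ℝ) → S → ℝ
  | 0, d => d
  | t + 1, d => fun s' => ∑ s, ∑ a, M.stateDist π t d s * π s a * M.P s a s'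

/-- Dirac distribution concentrated at a state. -/
def dirac (s : S) : S → ℝ := fun x => if x = s then 1 else 0

/-- Value function `V^π(s) = E[∑_t γ^t r(s_t) | s_0 = s]`. -/
noncomputable def V (M : MDP S A) (π : S → A → ℝ) (s : S) : ℝ :=
  ∑' t : ℕ, M.γ ^ t * ∑ s', M.stateDist π t (dirac s) s' * M.r s'

/-- State-action value `Q^π(s,a) = r(s) + γ E_{s'∼P(·|s,a)}[V^π(s')]`. -/
noncomputable def Q (M : MDP S A) (π : S → A → ℝ) (s : S) (a : A) : ℝ :=
  M.r s + M.γ * ∑ s', M.P s a s' * M.V π s'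

/-- Advantage function `A^π(s,a) = Q^π(s,a) − V^π(s)`. -/
noncomputable def Adv (M : MDP S A) (π : S → A → ℝ) (s : S) (a : A) : ℝ :=
  M.Q π s a - M.V π s

/-- Expected discounted return `η(π) = E_{s0∼ρ0}[V^π(s0)]`. -/
noncomputable def η (M : MDP S A) (π : S → A → ℝ) : ℝ :=
  ∑ s, M.ρ0 s * M.V π s

/-- `E_{τ∼π*}[∑_t γ^t A^π(s_t, a_t)]`: expected discounted advantage sum of `π`
along trajectories generated by `π*` from `ρ0`. -/
noncomputable def advSum (M : MDP S A) (π πStar : S → A → ℝ) : ℝ :=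
  ∑' t : ℕ, M.γ ^ t * ∑ s, ∑ a, M.stateDist πStar t M.ρ0 s * πStar s a * M.Adv π s a

end MDP

namespace MDP

lemma dirac_nonneg (s x : S) : 0 ≤ dirac s x := by
  unfold dirac; split <;> norm_num

lemma dirac_sum (s : S) : ∑ x, dirac s x = 1 := by
  simp [dirac]

lemma stateDist_nonneg (M : MDP S A) (π : S → A → ℝ) (hπ : IsPolicy π)
    (d : S → ℝ) (hd : ∀ s, 0 ≤ d s) : ∀ t s, 0 ≤ M.stateDist π t d s
  | 0, s => hd s
  | (t+1), s' => Finset.sum_nonneg fun s _ => Finset.sum_nonneg fun a _ =>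
      mul_nonneg (mul_nonneg (stateDist_nonneg M π hπ d hd t s) (hπ.1 s a)) (M.P_nonneg s a s')

lemma stateDist_sum (M : MDP S A) (π : S → A → ℝ) (hπ : IsPolicy π)
    (d : S → ℝ) (hd : ∑ s, d s = 1) : ∀ t, ∑ s, M.stateDist π t d s = 1
  | 0 => hd
  | (t+1) => by
      show ∑ s', ∑ s, ∑ a, M.stateDist π t d s * π s a * M.P s a s' = 1
      rw [Finset.sum_comm]
      have : ∀ s, ∑ s', ∑ a, M.stateDist π t d s * π s a * M.P s a s'
          = M.stateDist π t d s := by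
        intro s
        rw [Finset.sum_comm]
        have : ∀ a, ∑ s', M.stateDist π t d s * π s a * M.P s a s'
            = M.stateDist π t d s * π s a := by
          intro a
          rw [← Finset.mul_sum, M.P_sum, mul_one]
        simp only [this, ← Finset.mul_sum, hπ.2 s, mul_one]
      simp only [this, stateDist_sum M π hπ d hd t]

lemma prob_sum_abs_le {d x : S → ℝ} (h0 : ∀ s, 0 ≤ d s) (h1 : ∑ s, d s = 1) :
    |∑ s, d s * x s| ≤ ∑ s, |x s| := by
  calc |∑ s, d s * x s| ≤ ∑ s, |d s * x s| := Finset.abs_sum_le_sum_abs _ _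
    _ ≤ ∑ s, |x s| := by
        refine Finset.sum_le_sum fun s _ => ?_
        rw [abs_mul, abs_of_nonneg (h0 s)]
        have hd1 : d s ≤ 1 := h1 ▸ Finset.single_le_sum (fun i _ => h0 i) (Finset.mem_univ s)
        nlinarith [abs_nonneg (x s)]

lemma summable_geom_mul (M : MDP S A) (C : ℝ) (g : ℕ → ℝ) (hg : ∀ t, |g t| ≤ C) :
    Summable (fun t => M.γ ^ t * g t) := by
  have hγ0 : (0:ℝ) ≤ M.γ := le_of_lt M.γ_pos
  refine Summable.of_norm_bounded
    ((summable_geometric_of_lt_one hγ0 M.γ_lt_one).mul_left C) fun t => ?_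
  rw [Real.norm_eq_abs, abs_mul, abs_pow, abs_of_nonneg hγ0, mul_comm]
  exact mul_le_mul_of_nonneg_right (hg t) (pow_nonneg hγ0 t)

/-- Linearity of `stateDist` in the initial distribution. -/
lemma sum_comm3 {α β γ' : Type*} [Fintype α] [Fintype β] [Fintype γ'] (g : α → β → γ' → ℝ) :
    ∑ x, ∑ y, ∑ z, g x y z = ∑ z, ∑ x, ∑ y, g x y z := by
  calc ∑ x, ∑ y, ∑ z, g x y z = ∑ x, ∑ z, ∑ y, g x y z :=
        Finset.sum_congr rfl fun x _ => Finset.sum_comm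
    _ = ∑ z, ∑ x, ∑ y, g x y z := Finset.sum_comm

lemma stateDist_linear (M : MDP S A) (π : S → A → ℝ) (d : S → ℝ) :
    ∀ t s', M.stateDist π t d s' = ∑ s0, d s0 * M.stateDist π t (dirac s0) s'
  | 0, s' => by
      show d s' = ∑ s0, d s0 * dirac s0 s'
      simp [dirac, mul_ite]
  | (t+1), s' => by
      show ∑ s, ∑ a, M.stateDist π t d s * π s a * M.P s a s'
        = ∑ s0, d s0 * ∑ s, ∑ a, M.stateDist π t (dirac s0) s * π s a * M.P s a s'
      have key : ∀ s a, M.stateDist π t d s * π s a * M.P s a s'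
          = ∑ s0, d s0 * (M.stateDist π t (dirac s0) s * π s a * M.P s a s') := by
        intro s a
        rw [stateDist_linear M π d t, Finset.sum_mul, Finset.sum_mul]
        exact Finset.sum_congr rfl fun s0 _ => by ring
      simp only [key, Finset.mul_sum]
      exact sum_comm3 _

lemma summable_V_term (M : MDP S A) (π : S → A → ℝ) (hπ : IsPolicy π)
    (d : S → ℝ) (hd0 : ∀ s, 0 ≤ d s) (hd1 : ∑ s, d s = 1) (x : S → ℝ) :
    Summable (fun t => M.γ ^ t * ∑ s', M.stateDist π t d s' * x s') :=
  M.summable_geom_mul (∑ s', |x s'|) _ fun t =>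
    prob_sum_abs_le (M.stateDist_nonneg π hπ d hd0 t) (M.stateDist_sum π hπ d hd1 t)

/-- The expected-reward series from an initial distribution equals the mixture of values. -/
lemma tsum_reward (M : MDP S A) (π : S → A → ℝ) (hπ : IsPolicy π)
    (d : S → ℝ) (hd0 : ∀ s, 0 ≤ d s) (hd1 : ∑ s, d s = 1) :
    ∑' t : ℕ, M.γ ^ t * ∑ s', M.stateDist π t d s' * M.r s' = ∑ s0, d s0 * M.V π s0 := by
  have key : ∀ t, M.γ ^ t * ∑ s', M.stateDist π t d s' * M.r s'
      = ∑ s0, d s0 * (M.γ ^ t * ∑ s', M.stateDist π t (dirac s0) s' * M.r s') := by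
    intro t
    simp only [stateDist_linear M π d t, Finset.sum_mul, Finset.mul_sum]
    rw [Finset.sum_comm]
    refine Finset.sum_congr rfl fun s' _ => ?_
    refine Finset.sum_congr rfl fun s0 _ => ?_
    ring
  simp only [key]
  rw [Summable.tsum_finsetSum (fun s0 _ => ((M.summable_V_term π hπ (dirac s0) (dirac_nonneg s0)
    (dirac_sum s0) M.r).mul_left (d s0)))]
  refine Finset.sum_congr rfl fun s0 _ => ?_
  rw [tsum_mul_left]; rfl

/-- Per-step performance-difference identity. -/
lemma term_eq (M : MDP S A) (π πStar : S → A → ℝ) (hπStar : IsPolicy πStar) (t : ℕ) :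
    ∑ s, ∑ a, M.stateDist πStar t M.ρ0 s * πStar s a * M.Adv π s a
      = (∑ s, M.stateDist πStar t M.ρ0 s * M.r s)
        + M.γ * (∑ s, M.stateDist πStar (t+1) M.ρ0 s * M.V π s)
        - ∑ s, M.stateDist πStar t M.ρ0 s * M.V π s := by
  have expand : ∀ s a, M.stateDist πStar t M.ρ0 s * πStar s a * M.Adv π s a
      = M.stateDist πStar t M.ρ0 s * πStar s a * M.r s
        + M.stateDist πStar t M.ρ0 s * πStar s a * (M.γ * ∑ s', M.P s a s' * M.V π s')
        - M.stateDist πStar t M.ρ0 s * πStar s a * M.V π s := by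
    intro s a; simp only [Adv, Q]; ring
  have e1 : ∀ (x : S → ℝ), ∑ s, ∑ a, M.stateDist πStar t M.ρ0 s * πStar s a * x s
      = ∑ s, M.stateDist πStar t M.ρ0 s * x s := by
    intro x
    refine Finset.sum_congr rfl fun s _ => ?_
    have h : ∀ a, M.stateDist πStar t M.ρ0 s * πStar s a * x s
        = (M.stateDist πStar t M.ρ0 s * x s) * πStar s a := fun a => by ring
    simp only [h, ← Finset.mul_sum, hπStar.2 s, mul_one]
  have e2 : ∑ s, ∑ a, M.stateDist πStar t M.ρ0 s * πStar s a *
        (M.γ * ∑ s', M.P s a s' * M.V π s')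
      = M.γ * ∑ s', M.stateDist πStar (t+1) M.ρ0 s' * M.V π s' := by
    have step : ∀ s a, M.stateDist πStar t M.ρ0 s * πStar s a *
          (M.γ * ∑ s', M.P s a s' * M.V π s')
        = M.γ * ∑ s', M.stateDist πStar t M.ρ0 s * πStar s a * M.P s a s' * M.V π s' := by
      intro s a
      simp only [Finset.mul_sum]
      exact Finset.sum_congr rfl fun s' _ => by ring
    simp only [step, ← Finset.mul_sum]
    congr 1
    rw [sum_comm3 (fun s a s' =>
      M.stateDist πStar t M.ρ0 s * πStar s a * M.P s a s' * M.V π s')]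
    refine Finset.sum_congr rfl fun s' _ => ?_
    have hdef : M.stateDist πStar (t+1) M.ρ0 s'
        = ∑ s, ∑ a, M.stateDist πStar t M.ρ0 s * πStar s a * M.P s a s' := rfl
    rw [hdef]
    simp only [Finset.sum_mul]
  simp only [expand, Finset.sum_add_distrib, Finset.sum_sub_distrib]
  rw [e1 M.r, e1 (M.V π), e2]

set_option maxHeartbeats 1600000 in
/-- Performance-difference lemma: `advSum = η π* − η π`. -/
lemma advSum_eq (M : MDP S A) (π πStar : S → A → ℝ)
    (hπ : IsPolicy π) (hπStar : IsPolicy πStar) :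
    M.advSum π πStar = M.η πStar - M.η π := by
  have hRs : Summable (fun t => M.γ ^ t * ∑ s, M.stateDist πStar t M.ρ0 s * M.r s) :=
    M.summable_V_term πStar hπStar M.ρ0 M.ρ0_nonneg M.ρ0_sum M.r
  have hu : Summable (fun t => M.γ ^ t * ∑ s, M.stateDist πStar t M.ρ0 s * M.V π s) :=
    M.summable_V_term πStar hπStar M.ρ0 M.ρ0_nonneg M.ρ0_sum (M.V π)
  have hu1 : Summable (fun t => M.γ ^ (t+1) * ∑ s, M.stateDist πStar (t+1) M.ρ0 s * M.V π s) :=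
    (summable_nat_add_iff 1).mpr hu
  have key : ∀ t, M.γ ^ t * ∑ s, ∑ a, M.stateDist πStar t M.ρ0 s * πStar s a * M.Adv π s a
      = M.γ ^ t * (∑ s, M.stateDist πStar t M.ρ0 s * M.r s)
        + (M.γ ^ (t+1) * (∑ s, M.stateDist πStar (t+1) M.ρ0 s * M.V π s)
          - M.γ ^ t * (∑ s, M.stateDist πStar t M.ρ0 s * M.V π s)) := by
    intro t
    rw [M.term_eq π πStar hπStar t, pow_succ]
    ring
  calc M.advSum π πStar
      = ∑' t : ℕ, (M.γ ^ t * (∑ s, M.stateDist πStar t M.ρ0 s * M.r s)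
        + (M.γ ^ (t+1) * (∑ s, M.stateDist πStar (t+1) M.ρ0 s * M.V π s)
          - M.γ ^ t * (∑ s, M.stateDist πStar t M.ρ0 s * M.V π s))) :=
        tsum_congr key
    _ = (∑' t : ℕ, M.γ ^ t * (∑ s, M.stateDist πStar t M.ρ0 s * M.r s))
        + ((∑' t : ℕ, M.γ ^ (t+1) * (∑ s, M.stateDist πStar (t+1) M.ρ0 s * M.V π s))
          - ∑' t : ℕ, M.γ ^ t * (∑ s, M.stateDist πStar t M.ρ0 s * M.V π s)) := by
        rw [Summable.tsum_add hRs (hu1.sub hu), Summable.tsum_sub hu1 hu]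
    _ = (∑' t : ℕ, M.γ ^ t * (∑ s, M.stateDist πStar t M.ρ0 s * M.r s))
        - M.γ ^ 0 * (∑ s, M.stateDist πStar 0 M.ρ0 s * M.V π s) := by
        rw [Summable.tsum_eq_zero_add hu]
        ring
    _ = M.η πStar - M.η π := by
        rw [M.tsum_reward πStar hπStar M.ρ0 M.ρ0_nonneg M.ρ0_sum]
        simp only [pow_zero, one_mul]
        rfl

end MDP

/-- If `A^π ≥ 0` everywhere and `A^π(s*,a*) > 0` for some pair reachable with positive
probability at some time `t` under `π*`, then `η(π*) > η(π)`. -/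
theorem strict_improvement (M : MDP S A) (π πStar : S → A → ℝ)
    (hπ : IsPolicy π) (hπStar : IsPolicy πStar)
    (hA : ∀ s a, 0 ≤ M.Adv π s a)
    (sStar : S) (aStar : A) (t : ℕ)
    (hreach : 0 < M.stateDist πStar t M.ρ0 sStar * πStar sStar aStar)
    (hpos : 0 < M.Adv π sStar aStar) :
    M.η π < M.η πStar := by
  have hsum := M.advSum_eq π πStar hπ hπStar
  have hpos' : 0 < M.advSum π πStar := by
    set f : ℕ → ℝ := fun u =>
      M.γ ^ u * ∑ s, ∑ a, M.stateDist πStar u M.ρ0 s * πStar s a * M.Adv π s a with hf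
    have hnn : ∀ u, 0 ≤ f u := by
      intro u
      refine mul_nonneg (pow_nonneg (le_of_lt M.γ_pos) u) ?_
      refine Finset.sum_nonneg fun s _ => Finset.sum_nonneg fun a _ => ?_
      exact mul_nonneg (mul_nonneg
        (M.stateDist_nonneg πStar hπStar M.ρ0 M.ρ0_nonneg u s) (hπStar.1 s a)) (hA s a)
    have hsummable : Summable f := by
      refine M.summable_geom_mul (∑ s, ∑ a, |M.Adv π s a|) _ fun u => ?_
      calc |∑ s, ∑ a, M.stateDist πStar u M.ρ0 s * πStar s a * M.Adv π s a|
          ≤ ∑ s, ∑ a, |M.stateDist πStar u M.ρ0 s * πStar s a * M.Adv π s a| := by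
            refine (Finset.abs_sum_le_sum_abs _ _).trans (Finset.sum_le_sum fun s _ => ?_)
            exact Finset.abs_sum_le_sum_abs _ _
        _ ≤ ∑ s, ∑ a, |M.Adv π s a| := by
            refine Finset.sum_le_sum fun s _ => Finset.sum_le_sum fun a _ => ?_
            rw [abs_mul, abs_mul]
            have h1 : |M.stateDist πStar u M.ρ0 s| ≤ 1 := by
              rw [abs_of_nonneg (M.stateDist_nonneg πStar hπStar M.ρ0 M.ρ0_nonneg u s)]
              exact (M.stateDist_sum πStar hπStar M.ρ0 M.ρ0_sum u) ▸
                Finset.single_le_sum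
                  (fun i _ => M.stateDist_nonneg πStar hπStar M.ρ0 M.ρ0_nonneg u i)
                  (Finset.mem_univ s)
            have h2 : |πStar s a| ≤ 1 := by
              rw [abs_of_nonneg (hπStar.1 s a)]
              exact (hπStar.2 s) ▸
                Finset.single_le_sum (fun i _ => hπStar.1 s i) (Finset.mem_univ a)
            have h3 : |M.stateDist πStar u M.ρ0 s| * |πStar s a| ≤ 1 := by
              nlinarith [abs_nonneg (πStar s a), abs_nonneg (M.stateDist πStar u M.ρ0 s)]
            calc |M.stateDist πStar u M.ρ0 s| * |πStar s a| * |M.Adv π s a|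
                ≤ 1 * |M.Adv π s a| := mul_le_mul_of_nonneg_right h3 (abs_nonneg _)
              _ = |M.Adv π s a| := one_mul _
    have hft : 0 < f t := by
      have hsingle : M.stateDist πStar t M.ρ0 sStar * πStar sStar aStar * M.Adv π sStar aStar
          ≤ ∑ s, ∑ a, M.stateDist πStar t M.ρ0 s * πStar s a * M.Adv π s a := by
        have inner : ∀ s, 0 ≤ ∑ a, M.stateDist πStar t M.ρ0 s * πStar s a * M.Adv π s a :=
          fun s => Finset.sum_nonneg fun a _ => mul_nonneg (mul_nonneg
            (M.stateDist_nonneg πStar hπStar M.ρ0 M.ρ0_nonneg t s) (hπStar.1 s a)) (hA s a)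
        calc M.stateDist πStar t M.ρ0 sStar * πStar sStar aStar * M.Adv π sStar aStar
            ≤ ∑ a, M.stateDist πStar t M.ρ0 sStar * πStar sStar a * M.Adv π sStar a :=
              Finset.single_le_sum (fun a _ => mul_nonneg (mul_nonneg
                (M.stateDist_nonneg πStar hπStar M.ρ0 M.ρ0_nonneg t sStar) (hπStar.1 sStar a))
                (hA sStar a)) (Finset.mem_univ aStar)
          _ ≤ ∑ s, ∑ a, M.stateDist πStar t M.ρ0 s * πStar s a * M.Adv π s a :=
              Finset.single_le_sum (fun s _ => inner s) (Finset.mem_univ sStar)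
      have : 0 < M.stateDist πStar t M.ρ0 sStar * πStar sStar aStar * M.Adv π sStar aStar :=
        mul_pos hreach hpos
      exact mul_pos (pow_pos M.γ_pos t) (lt_of_lt_of_le this hsingle)
    calc (0:ℝ) < f t := hft
      _ ≤ M.advSum π πStar := Summable.le_tsum hsummable t fun j _ => hnn j
  linarith
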